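/- Let g₀ be the N(0, A) density, ε ∈ (0,1), ω > 0, and g₁(b) = g₀(b)(1 + ε(cos(ωb) − e^{−Aω²/2})). Let G_j have density g_j and let P_{j,1} be the law of b̂ = b + ξ with b ~ G_j and ξ ~ N(0, τ²) independent. If ω² = log(n)·(A+τ²)/(Aτ²), then the chi-square divergence satisfies χ²(P_{1,1}, P_{0,1}) = (ε²/(2n))(1 − n^{−A/τ²})² ≤ ε²/(2n). -/

import Mathlib

open MeasureTheory Real Complex


lemma int_expcos {q : ℝ} (hq : 0 < q) (w μ : ℝ) :
    Integrable fun b : ℝ => Real.exp (-(q * (b - μ) ^ 2)) * Real.cos (w * b) := by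
  have h1 : Integrable fun b : ℝ => Real.exp (-(q * (b - μ) ^ 2)) := by
    simpa [neg_mul] using (integrable_exp_neg_mul_sq hq).comp_sub_right μ
  refine h1.mono' (Continuous.aestronglyMeasurable (by continuity))
    (Filter.Eventually.of_forall fun b => ?_)
  rw [norm_mul, Real.norm_eq_abs, Real.norm_eq_abs, abs_of_pos (Real.exp_pos _)]
  nlinarith [abs_cos_le_one (w * b), Real.exp_pos (-(q * (b - μ) ^ 2)), abs_nonneg (Real.cos (w*b))]

lemma int_expsin {q : ℝ} (hq : 0 < q) (w μ : ℝ) :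
    Integrable fun b : ℝ => Real.exp (-(q * (b - μ) ^ 2)) * Real.sin (w * b) := by
  have h1 : Integrable fun b : ℝ => Real.exp (-(q * (b - μ) ^ 2)) := by
    simpa [neg_mul] using (integrable_exp_neg_mul_sq hq).comp_sub_right μ
  refine h1.mono' (Continuous.aestronglyMeasurable (by continuity))
    (Filter.Eventually.of_forall fun b => ?_)
  rw [norm_mul, Real.norm_eq_abs, Real.norm_eq_abs, abs_of_pos (Real.exp_pos _)]
  nlinarith [abs_sin_le_one (w * b), Real.exp_pos (-(q * (b - μ) ^ 2)), abs_nonneg (Real.sin (w*b))]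

lemma gauss_cos {q : ℝ} (hq : 0 < q) (w : ℝ) :
    (∫ b : ℝ, Real.exp (-(q * b ^ 2)) * Real.cos (w * b)
      = Real.sqrt (π / q) * Real.exp (-(w ^ 2 / (4 * q)))) ∧
    (∫ b : ℝ, Real.exp (-(q * b ^ 2)) * Real.sin (w * b) = 0) := by
  have hb : ((-q : ℂ)).re < 0 := by simpa using hq
  have key := integral_cexp_quadratic hb (w * I) 0
  have hint := integrable_cexp_quadratic' hb (w * I) 0
  have hz : ∀ b : ℝ, ((-q : ℂ) * (b:ℂ) ^ 2 + ((w:ℂ) * I) * b + 0)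
      = ((-(q * b ^ 2) : ℝ) : ℂ) + ((w * b : ℝ) : ℂ) * I := by
    intro b; push_cast; ring
  have hre : ∀ b : ℝ, (cexp ((-q : ℂ) * b ^ 2 + (w * I) * b + 0)).re
      = Real.exp (-(q * b ^ 2)) * Real.cos (w * b) := by
    intro b; rw [hz, Complex.exp_re]; simp [← Complex.ofReal_pow]
  have him : ∀ b : ℝ, (cexp ((-q : ℂ) * b ^ 2 + (w * I) * b + 0)).im
      = Real.exp (-(q * b ^ 2)) * Real.sin (w * b) := by
    intro b; rw [hz, Complex.exp_im]; simp [← Complex.ofReal_pow]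
  have hIre := integral_re (𝕜 := ℂ) hint
  have hIim := integral_im (𝕜 := ℂ) hint
  simp only [RCLike.re_to_complex, RCLike.im_to_complex] at hIre hIim
  simp_rw [hre] at hIre
  simp_rw [him] at hIim
  have hq' : (q : ℂ) ≠ 0 := by exact_mod_cast hq.ne'
  have hrhs : ((π : ℂ) / -(-q : ℂ)) ^ (1 / 2 : ℂ) * cexp (0 - ((w:ℂ) * I) ^ 2 / (4 * (-q : ℂ)))
      = ((Real.sqrt (π / q) * Real.exp (-(w ^ 2 / (4 * q))) : ℝ) : ℂ) := by
    rw [neg_neg]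
    have h2 : ((π : ℂ) / (q : ℂ)) ^ (1 / 2 : ℂ) = ((Real.sqrt (π / q) : ℝ) : ℂ) := by
      rw [show ((π : ℂ) / (q : ℂ)) = ((π / q : ℝ) : ℂ) by push_cast; ring,
        show (1 / 2 : ℂ) = ((1 / 2 : ℝ) : ℂ) by norm_num,
        ← Complex.ofReal_cpow (by positivity), Real.sqrt_eq_rpow]
    have h3 : (0 : ℂ) - ((w:ℂ) * I) ^ 2 / (4 * (-q : ℂ)) = ((-(w ^ 2 / (4 * q)) : ℝ) : ℂ) := by
      rw [show ((w:ℂ) * I) ^ 2 = -(((w:ℝ) ^ 2 : ℝ) : ℂ) by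
        rw [mul_pow, Complex.I_sq]; push_cast; ring]
      push_cast
      field_simp
      ring
    rw [h2, h3, ← Complex.ofReal_exp, ← Complex.ofReal_mul]
  rw [key, hrhs] at hIre hIim
  constructor
  · rw [hIre, Complex.ofReal_re]
  · rw [hIim, Complex.ofReal_im]

lemma int_expq {q : ℝ} (hq : 0 < q) (μ : ℝ) :
    Integrable fun b : ℝ => Real.exp (-(q * (b - μ) ^ 2)) := by
  simpa [neg_mul] using (integrable_exp_neg_mul_sq hq).comp_sub_right μ

lemma gauss_shift {q : ℝ} (hq : 0 < q) (μ : ℝ) :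
    ∫ b : ℝ, Real.exp (-(q * (b - μ) ^ 2)) = Real.sqrt (π / q) := by
  have h := integral_add_right_eq_self (μ := volume)
    (fun b : ℝ => Real.exp (-(q * (b - μ) ^ 2))) μ
  simp only [add_sub_cancel_right] at h
  rw [← h]
  simpa [neg_mul] using integral_gaussian q

lemma gauss_cos_shift {q : ℝ} (hq : 0 < q) (w μ : ℝ) :
    ∫ b : ℝ, Real.exp (-(q * (b - μ) ^ 2)) * Real.cos (w * b)
      = Real.sqrt (π / q) * Real.exp (-(w ^ 2 / (4 * q))) * Real.cos (w * μ) := by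
  have h := integral_add_right_eq_self (μ := volume)
    (fun b : ℝ => Real.exp (-(q * (b - μ) ^ 2)) * Real.cos (w * b)) μ
  simp only [add_sub_cancel_right] at h
  rw [← h]
  have hpt : ∀ b : ℝ, Real.exp (-(q * b ^ 2)) * Real.cos (w * (b + μ))
      = (Real.exp (-(q * b ^ 2)) * Real.cos (w * b)) * Real.cos (w * μ)
        - (Real.exp (-(q * b ^ 2)) * Real.sin (w * b)) * Real.sin (w * μ) := by
    intro b
    rw [mul_add, Real.cos_add]
    ring
  simp_rw [hpt]
  rw [integral_sub (((int_expcos hq w 0).congr ?_).mul_const _)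
      (((int_expsin hq w 0).congr ?_).mul_const _),
    integral_mul_const, integral_mul_const, (gauss_cos hq w).1, (gauss_cos hq w).2]
  · ring
  · filter_upwards with b; simp
  · filter_upwards with b; simp

lemma final_int {r : ℝ} (hr : 0 < r) (a c d : ℝ) :
    ∫ x : ℝ, (c * Real.cos (a * x) - d) ^ 2 * Real.exp (-(r * x ^ 2))
      = Real.sqrt (π / r) * (c ^ 2 / 2 * (1 + Real.exp (-((2 * a) ^ 2 / (4 * r))))
          - 2 * c * d * Real.exp (-(a ^ 2 / (4 * r))) + d ^ 2) := by
  have hpt : ∀ x : ℝ, (c * Real.cos (a * x) - d) ^ 2 * Real.exp (-(r * x ^ 2))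
      = (c ^ 2 / 2 + d ^ 2) * Real.exp (-(r * x ^ 2))
        + (c ^ 2 / 2 * (Real.exp (-(r * x ^ 2)) * Real.cos (2 * a * x))
          - (2 * c * d) * (Real.exp (-(r * x ^ 2)) * Real.cos (a * x))) := by
    intro x
    have h2 : Real.cos (2 * a * x) = 2 * Real.cos (a * x) ^ 2 - 1 := by
      rw [mul_assoc, Real.cos_two_mul]
    rw [h2]; ring
  simp_rw [hpt]
  have i0 : Integrable fun x : ℝ => Real.exp (-(r * x ^ 2)) := by
    simpa using int_expq hr 0
  have i1 : Integrable fun x : ℝ => Real.exp (-(r * x ^ 2)) * Real.cos (2 * a * x) :=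
    (int_expcos hr (2 * a) 0).congr (by filter_upwards with b; simp)
  have i2 : Integrable fun x : ℝ => Real.exp (-(r * x ^ 2)) * Real.cos (a * x) :=
    (int_expcos hr a 0).congr (by filter_upwards with b; simp)
  have i1' : Integrable fun x : ℝ => c ^ 2 / 2 * (Real.exp (-(r * x ^ 2)) * Real.cos (2 * a * x)) :=
    i1.const_mul _
  have i2' : Integrable fun x : ℝ => 2 * c * d * (Real.exp (-(r * x ^ 2)) * Real.cos (a * x)) :=
    i2.const_mul _
  have i3 : Integrable fun x : ℝ => c ^ 2 / 2 * (Real.exp (-(r * x ^ 2)) * Real.cos (2 * a * x))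
      - 2 * c * d * (Real.exp (-(r * x ^ 2)) * Real.cos (a * x)) := i1'.sub i2'
  have i0' : Integrable fun x : ℝ => (c ^ 2 / 2 + d ^ 2) * Real.exp (-(r * x ^ 2)) :=
    i0.const_mul _
  rw [integral_add i0' i3, integral_sub i1' i2', integral_const_mul, integral_const_mul,
    integral_const_mul]
  have g0 : ∫ x : ℝ, Real.exp (-(r * x ^ 2)) = Real.sqrt (π / r) := by
    simpa [neg_mul] using integral_gaussian r
  have g1 : ∫ x : ℝ, Real.exp (-(r * x ^ 2)) * Real.cos (2 * a * x)
      = Real.sqrt (π / r) * Real.exp (-((2 * a) ^ 2 / (4 * r))) := (gauss_cos hr (2 * a)).1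
  have g2 : ∫ x : ℝ, Real.exp (-(r * x ^ 2)) * Real.cos (a * x)
      = Real.sqrt (π / r) * Real.exp (-(a ^ 2 / (4 * r))) := (gauss_cos hr a).1
  rw [g0, g1, g2]
  ring

lemma comb (A τ2 x b : ℝ) (hA : 0 < A) (hτ : 0 < τ2) :
    -(x - b) ^ 2 / (2 * τ2) + -b ^ 2 / (2 * A)
      = -x ^ 2 / (2 * (A + τ2)) + -((A + τ2) / (2 * A * τ2) * (b - A * x / (A + τ2)) ^ 2) := by
  have h : A + τ2 ≠ 0 := by positivity
  field_simp
  ring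

lemma const_combo (A τ2 : ℝ) (hA : 0 < A) (hτ : 0 < τ2) :
    (Real.sqrt (2 * π * τ2))⁻¹ * (Real.sqrt (2 * π * A))⁻¹
        * Real.sqrt (π / ((A + τ2) / (2 * A * τ2)))
      = (Real.sqrt (2 * π * (A + τ2)))⁻¹ := by
  have hσ : (0:ℝ) < A + τ2 := by positivity
  have h1 : π / ((A + τ2) / (2 * A * τ2)) = 2 * π * τ2 * (2 * π * A) / (2 * π * (A + τ2)) := by
    field_simp
  rw [h1, Real.sqrt_div (by positivity), Real.sqrt_mul (by positivity)]
  have s1 : Real.sqrt (2 * π * τ2) ≠ 0 := by positivity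
  have s2 : Real.sqrt (2 * π * A) ≠ 0 := by positivity
  have s3 : Real.sqrt (2 * π * (A + τ2)) ≠ 0 := by positivity
  field_simp
  rw [← Real.sqrt_mul (by positivity : (0:ℝ) ≤ 2 * π), ← Real.sqrt_mul (by positivity : (0:ℝ) ≤ 2 * π * τ2)]
  congr 1
  ring

set_option maxHeartbeats 1000000 in
/-- **Chi-square divergence between perturbed Gaussian mixture marginals.** Let `g₀` be
the `N(0, A)` density and `g₁(b) = g₀(b)(1 + ε(cos(ωb) − e^{−Aω²/2}))` with
`ω² = log(n)·(A+τ²)/(Aτ²)`. Let `m_j = g_j * φ(·; τ²)` be the marginal density of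
`b̂ = b + ξ`, `b ~ G_j`, `ξ ~ N(0, τ²)`. Then
`χ²(P₁,₁, P₀,₁) = ∫ (m₁/m₀ − 1)² m₀ = (ε²/(2n))(1 − n^{−A/τ²})² ≤ ε²/(2n)`. -/
theorem stmt12 (A τ2 : ℝ) (hA : 0 < A) (hτ : 0 < τ2) (n : ℕ) (hn : 2 ≤ n)
    (ε : ℝ) (hε : ε ∈ Set.Ioo (0 : ℝ) 1)
    (ω : ℝ) (hω : ω ^ 2 = Real.log n * (A + τ2) / (A * τ2))
    (g₀ g₁ m₀ m₁ : ℝ → ℝ)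
    (hg₀ : ∀ b, g₀ b = (Real.sqrt (2 * Real.pi * A))⁻¹ * Real.exp (-b ^ 2 / (2 * A)))
    (hg₁ : ∀ b, g₁ b = g₀ b * (1 + ε * (Real.cos (ω * b) - Real.exp (-A * ω ^ 2 / 2))))
    (hm₀ : ∀ x, m₀ x = ∫ b, (Real.sqrt (2 * Real.pi * τ2))⁻¹ *
      Real.exp (-(x - b) ^ 2 / (2 * τ2)) * g₀ b)
    (hm₁ : ∀ x, m₁ x = ∫ b, (Real.sqrt (2 * Real.pi * τ2))⁻¹ *
      Real.exp (-(x - b) ^ 2 / (2 * τ2)) * g₁ b) :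
    (∫ x, (m₁ x / m₀ x - 1) ^ 2 * m₀ x)
      = ε ^ 2 / (2 * n) * (1 - (n : ℝ) ^ (-(A / τ2))) ^ 2 ∧
    (∫ x, (m₁ x / m₀ x - 1) ^ 2 * m₀ x) ≤ ε ^ 2 / (2 * n) := by
  have hσ : (0:ℝ) < A + τ2 := by positivity
  set σ2 := A + τ2 with hσ2def
  have hq0 : (0:ℝ) < σ2 / (2 * A * τ2) := by positivity
  set q := σ2 / (2 * A * τ2) with hqdef
  set cc := Real.exp (-(ω ^ 2 * A * τ2 / (2 * σ2))) with hccdef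
  set dd := Real.exp (-A * ω ^ 2 / 2) with hdddef
  set aa := ω * A / σ2 with haadef
  -- pointwise combination of exponentials
  have hexp : ∀ x b : ℝ, Real.exp (-(x - b) ^ 2 / (2 * τ2)) * Real.exp (-b ^ 2 / (2 * A))
      = Real.exp (-x ^ 2 / (2 * σ2)) * Real.exp (-(q * (b - A * x / σ2) ^ 2)) := by
    intro x b
    rw [← Real.exp_add, ← Real.exp_add]
    exact congrArg Real.exp (comb A τ2 x b hA hτ)
  -- m₀ closed form
  have hm0C : ∀ x, m₀ x = ((Real.sqrt (2 * π * τ2))⁻¹ * (Real.sqrt (2 * π * A))⁻¹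
      * Real.exp (-x ^ 2 / (2 * σ2))) * Real.sqrt (π / q) := by
    intro x
    rw [hm₀]
    have hpt : ∀ b, (Real.sqrt (2 * Real.pi * τ2))⁻¹ *
        Real.exp (-(x - b) ^ 2 / (2 * τ2)) * g₀ b
        = ((Real.sqrt (2 * π * τ2))⁻¹ * (Real.sqrt (2 * π * A))⁻¹
            * Real.exp (-x ^ 2 / (2 * σ2))) * Real.exp (-(q * (b - A * x / σ2) ^ 2)) := by
      intro b
      rw [hg₀ b]
      calc (Real.sqrt (2 * Real.pi * τ2))⁻¹ * Real.exp (-(x - b) ^ 2 / (2 * τ2)) *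
            ((Real.sqrt (2 * Real.pi * A))⁻¹ * Real.exp (-b ^ 2 / (2 * A)))
          = ((Real.sqrt (2 * π * τ2))⁻¹ * (Real.sqrt (2 * π * A))⁻¹) *
            (Real.exp (-(x - b) ^ 2 / (2 * τ2)) * Real.exp (-b ^ 2 / (2 * A))) := by ring
        _ = _ := by rw [hexp x b]; ring
    simp_rw [hpt]
    rw [integral_const_mul, gauss_shift hq0]
  have hm0' : ∀ x, m₀ x = (Real.sqrt (2 * π * σ2))⁻¹ * Real.exp (-x ^ 2 / (2 * σ2)) := by
    intro x
    rw [hm0C x, ← const_combo A τ2 hA hτ]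
    ring
  have hm0pos : ∀ x, 0 < m₀ x := by
    intro x
    rw [hm0' x]
    positivity
  -- m₁ closed form
  have hm1' : ∀ x, m₁ x = m₀ x * (1 + ε * (cc * Real.cos (aa * x) - dd)) := by
    intro x
    rw [hm₁]
    have hpt : ∀ b, (Real.sqrt (2 * Real.pi * τ2))⁻¹ *
        Real.exp (-(x - b) ^ 2 / (2 * τ2)) * g₁ b
        = ((Real.sqrt (2 * π * τ2))⁻¹ * (Real.sqrt (2 * π * A))⁻¹
            * Real.exp (-x ^ 2 / (2 * σ2))) *
          (Real.exp (-(q * (b - A * x / σ2) ^ 2))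
            + ε * (Real.exp (-(q * (b - A * x / σ2) ^ 2)) * Real.cos (ω * b)
              - dd * Real.exp (-(q * (b - A * x / σ2) ^ 2)))) := by
      intro b
      rw [hg₁ b, hg₀ b]
      calc (Real.sqrt (2 * Real.pi * τ2))⁻¹ * Real.exp (-(x - b) ^ 2 / (2 * τ2)) *
            ((Real.sqrt (2 * Real.pi * A))⁻¹ * Real.exp (-b ^ 2 / (2 * A)) *
              (1 + ε * (Real.cos (ω * b) - dd)))
          = ((Real.sqrt (2 * π * τ2))⁻¹ * (Real.sqrt (2 * π * A))⁻¹) *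
            (Real.exp (-(x - b) ^ 2 / (2 * τ2)) * Real.exp (-b ^ 2 / (2 * A))) *
              (1 + ε * (Real.cos (ω * b) - dd)) := by ring
        _ = _ := by rw [hexp x b]; ring
    simp_rw [hpt]
    have i1 : Integrable fun b : ℝ => Real.exp (-(q * (b - A * x / σ2) ^ 2)) :=
      int_expq hq0 _
    have i2 : Integrable fun b : ℝ =>
        Real.exp (-(q * (b - A * x / σ2) ^ 2)) * Real.cos (ω * b) := int_expcos hq0 _ _
    have i3 : Integrable fun b : ℝ => dd * Real.exp (-(q * (b - A * x / σ2) ^ 2)) :=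
      i1.const_mul _
    have i4 : Integrable fun b : ℝ =>
        Real.exp (-(q * (b - A * x / σ2) ^ 2)) * Real.cos (ω * b)
          - dd * Real.exp (-(q * (b - A * x / σ2) ^ 2)) := i2.sub i3
    have i5 : Integrable fun b : ℝ =>
        ε * (Real.exp (-(q * (b - A * x / σ2) ^ 2)) * Real.cos (ω * b)
          - dd * Real.exp (-(q * (b - A * x / σ2) ^ 2))) := i4.const_mul _
    rw [integral_const_mul, integral_add i1 i5, integral_const_mul, integral_sub i2 i3,
      integral_const_mul, gauss_shift hq0, gauss_cos_shift hq0]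
    have e1 : Real.exp (-(ω ^ 2 / (4 * q))) = cc := by
      rw [hccdef]
      congr 1
      rw [hqdef]
      field_simp
      ring
    have e2 : Real.cos (ω * (A * x / σ2)) = Real.cos (aa * x) := by
      congr 1
      rw [haadef]
      ring
    rw [e1, e2, hm0C x]
    ring
  -- the ratio
  have hratio : ∀ x, m₁ x / m₀ x - 1 = ε * (cc * Real.cos (aa * x) - dd) := by
    intro x
    rw [hm1' x, mul_comm (m₀ x), mul_div_assoc, div_self (hm0pos x).ne', mul_one]
    ring
  -- the chi-square integral
  have hr0 : (0:ℝ) < 1 / (2 * σ2) := by positivity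
  have hpt2 : ∀ x : ℝ, (m₁ x / m₀ x - 1) ^ 2 * m₀ x
      = (ε ^ 2 * (Real.sqrt (2 * π * σ2))⁻¹) *
        ((cc * Real.cos (aa * x) - dd) ^ 2 * Real.exp (-(1 / (2 * σ2) * x ^ 2))) := by
    intro x
    rw [hratio x, hm0' x, show -x ^ 2 / (2 * σ2) = -(1 / (2 * σ2) * x ^ 2) by ring]
    ring
  have hIval : (∫ x, (m₁ x / m₀ x - 1) ^ 2 * m₀ x)
      = ε ^ 2 * ((cc ^ 2 / 2 * (1 + Real.exp (-((2 * aa) ^ 2 / (4 * (1 / (2 * σ2))))))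
          - 2 * cc * dd * Real.exp (-(aa ^ 2 / (4 * (1 / (2 * σ2))))) + dd ^ 2)) := by
    simp_rw [hpt2]
    rw [integral_const_mul, final_int hr0 aa cc dd]
    have hs : Real.sqrt (π / (1 / (2 * σ2))) = Real.sqrt (2 * π * σ2) := by
      congr 1
      field_simp
    have s3 : Real.sqrt (2 * π * σ2) ≠ 0 := by positivity
    rw [hs]
    field_simp
  -- numeric evaluation
  have hn1 : (1:ℝ) < (n:ℝ) := by exact_mod_cast Nat.lt_of_lt_of_le Nat.one_lt_two hn
  have hnpos : (0:ℝ) < (n:ℝ) := by linarith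
  set L := Real.log n with hLdef
  have hL : 0 < L := Real.log_pos hn1
  have hexpL : Real.exp L = n := Real.exp_log hnpos
  set η := (n : ℝ) ^ (-(A / τ2)) with hηdef
  have hη : η = Real.exp (L * -(A / τ2)) := by
    rw [hηdef, Real.rpow_def_of_pos hnpos]
  have hτ' : τ2 ≠ 0 := hτ.ne'
  have hA' : A ≠ 0 := hA.ne'
  have hσ' : σ2 ≠ 0 := hσ.ne'
  have F1 : cc ^ 2 = Real.exp (-L) := by
    rw [hccdef, sq, ← Real.exp_add]
    congr 1
    rw [hω, hσ2def]
    field_simp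
    ring
  have haa2 : aa ^ 2 = ω ^ 2 * A ^ 2 / σ2 ^ 2 := by
    rw [haadef, div_pow, mul_pow]
  have hval1 : (2 * aa) ^ 2 / (4 * (1 / (2 * σ2))) = 2 * (L * (A / τ2)) := by
    rw [mul_pow, haa2, hω, hσ2def]
    field_simp
    ring
  have hval2 : aa ^ 2 / (4 * (1 / (2 * σ2))) = L * (A / τ2) / 2 := by
    rw [haa2, hω, hσ2def]
    field_simp
    ring
  have F2 : Real.exp (-((2 * aa) ^ 2 / (4 * (1 / (2 * σ2))))) = η ^ 2 := by
    rw [hval1, hη, sq, ← Real.exp_add]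
    congr 1
    ring
  have F3 : cc * dd * Real.exp (-(aa ^ 2 / (4 * (1 / (2 * σ2))))) = Real.exp (-L) * η := by
    rw [hccdef, hdddef, hval2, hη, ← Real.exp_add, ← Real.exp_add, ← Real.exp_add]
    congr 1
    rw [hω, hσ2def]
    field_simp
    ring
  have F4 : dd ^ 2 = Real.exp (-L) * η := by
    rw [hdddef, hη, sq, ← Real.exp_add, ← Real.exp_add]
    congr 1
    rw [hω, hσ2def]
    field_simp
    ring
  have hinv : Real.exp (-L) = (n : ℝ)⁻¹ := by rw [Real.exp_neg, hexpL]
  have hIfinal : (∫ x, (m₁ x / m₀ x - 1) ^ 2 * m₀ x)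
      = ε ^ 2 / (2 * n) * (1 - η) ^ 2 := by
    rw [hIval, F2, F4, show 2 * cc * dd * Real.exp (-(aa ^ 2 / (4 * (1 / (2 * σ2)))))
      = 2 * (cc * dd * Real.exp (-(aa ^ 2 / (4 * (1 / (2 * σ2)))))) by ring, F3, F1, hinv]
    field_simp
    ring
  refine ⟨hIfinal, ?_⟩
  rw [hIfinal]
  have hη1 : η ≤ 1 := by
    rw [hηdef]
    exact Real.rpow_le_one_of_one_le_of_nonpos (le_of_lt hn1)
      (neg_nonpos.mpr (by positivity))
  have hηpos : 0 < η := by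
    rw [hηdef]
    positivity
  have hsq : (1 - η) ^ 2 ≤ 1 := by nlinarith
  have h2n : (0:ℝ) ≤ ε ^ 2 / (2 * n) := by positivity
  calc ε ^ 2 / (2 * ↑n) * (1 - η) ^ 2 ≤ ε ^ 2 / (2 * ↑n) * 1 :=
        mul_le_mul_of_nonneg_left hsq h2n
    _ = ε ^ 2 / (2 * ↑n) := mul_one _
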